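/- For all real x not in πℤ, the series ∑_{j=1}^∞ 1/((πj)² − x²) converges and equals (1/2)(1/x² − cos(x)/(x sin(x))). -/

import Mathlib

open Real Complex MeasureTheory Set intervalIntegral

noncomputable section

local notation "𝕌" => UnitAddCircle

private lemma my_integral_cexp {a : ℂ} (ha : a ≠ 0) :
    ∫ t in (0:ℝ)..1, Complex.exp (a * t) = (Complex.exp a - 1) / a := by
  have h : ∀ t : ℝ, HasDerivAt (fun u : ℝ => Complex.exp (a * u) / a) (Complex.exp (a * t)) t := by
    intro t
    have h1 : HasDerivAt (fun u : ℝ => a * (u : ℂ)) a t := by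
      simpa using (Complex.ofRealCLM.hasDerivAt (x := t)).const_mul a
    simpa [mul_div_cancel_right₀ _ ha] using h1.cexp.div_const a
  rw [integral_eq_sub_of_hasDerivAt (fun t _ => h t)
    ((Complex.continuous_exp.comp (continuous_const.mul
      Complex.continuous_ofReal)).intervalIntegrable _ _)]
  simp [sub_div]

private lemma my_exp_aux1 (x : ℝ) :
    Complex.exp (-(x:ℂ)*I) * (Complex.exp (2*x*I) - 1) = 2*I*Complex.sin x := by
  rw [Complex.sin, mul_sub, ← Complex.exp_add, mul_one]
  ring_nf
  linear_combination (Complex.exp ((x:ℂ) * I) - Complex.exp (-((x:ℂ) * I))) * Complex.I_sq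

private lemma my_exp_aux2 (x : ℝ) :
    Complex.exp ((x:ℂ)*I) * (Complex.exp (-(2*x*I)) - 1) = -(2*I*Complex.sin x) := by
  rw [Complex.sin, mul_sub, ← Complex.exp_add, mul_one]
  ring_nf
  linear_combination (Complex.exp (-((x:ℂ) * I)) - Complex.exp ((x:ℂ) * I)) * Complex.I_sq

private lemma my_coeff_eq (x : ℝ) (hx : ∀ n : ℤ, x ≠ π * n) (n : ℤ) :
    fourierCoeffOn (by norm_num : (0:ℝ) < 1)
        (fun t : ℝ => Complex.cos (x * (2*t - 1))) n
      = ((x * Real.sin x / (x^2 - (π*n)^2) : ℝ) : ℂ) := by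
  have hsub : ((x - π*n : ℝ) : ℂ) ≠ 0 := by
    exact_mod_cast sub_ne_zero.mpr (hx n)
  have haddR : x + π*n ≠ 0 := by
    intro h
    exact sub_ne_zero.mpr (hx (-n)) (by push_cast; linarith)
  have hadd : ((x + π*n : ℝ) : ℂ) ≠ 0 := by exact_mod_cast haddR
  have h2I : (2*I : ℂ) ≠ 0 := by simp [Complex.I_ne_zero]
  set a₁ : ℂ := 2*(x:ℂ)*I - (n:ℂ)*(2*(π:ℂ)*I) with ha₁def
  set a₂ : ℂ := -(2*(x:ℂ)*I) - (n:ℂ)*(2*(π:ℂ)*I) with ha₂def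
  have e1 : a₁ = (2*I) * ((x - π*n : ℝ) : ℂ) := by rw [ha₁def]; push_cast; ring
  have e2 : a₂ = (2*I) * (-((x + π*n : ℝ) : ℂ)) := by rw [ha₂def]; push_cast; ring
  have ha₁ : a₁ ≠ 0 := by rw [e1]; exact mul_ne_zero h2I hsub
  have ha₂ : a₂ ≠ 0 := by rw [e2]; exact mul_ne_zero h2I (neg_ne_zero.mpr hadd)
  rw [fourierCoeffOn_eq_integral]
  simp_rw [fourier_coe_apply]
  rw [intervalIntegral.integral_congr (g := fun t : ℝ =>
      (Complex.exp (-(x:ℂ)*I) * Complex.exp (a₁ * t)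
        + Complex.exp ((x:ℂ)*I) * Complex.exp (a₂ * t)) / 2)]
  swap
  · intro t _
    simp only [smul_eq_mul, Complex.cos, mul_div_assoc, mul_add, ← Complex.exp_add,
      ha₁def, ha₂def]
    norm_num
    ring_nf
    rw [← Complex.exp_add, ← Complex.exp_add]
    ring_nf
  have int1 : IntervalIntegrable
      (fun t : ℝ => Complex.exp (-(x:ℂ)*I) * Complex.exp (a₁ * t)) volume 0 1 :=
    (Continuous.intervalIntegrable (by fun_prop) _ _)
  have int2 : IntervalIntegrable
      (fun t : ℝ => Complex.exp ((x:ℂ)*I) * Complex.exp (a₂ * t)) volume 0 1 :=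
    (Continuous.intervalIntegrable (by fun_prop) _ _)
  rw [intervalIntegral.integral_div, intervalIntegral.integral_add int1 int2,
    intervalIntegral.integral_const_mul, intervalIntegral.integral_const_mul,
    my_integral_cexp ha₁, my_integral_cexp ha₂]
  rw [ha₁def, ha₂def, Complex.exp_sub, Complex.exp_sub, Complex.exp_int_mul_two_pi_mul_I,
    div_one, div_one, ← ha₁def, ← ha₂def]
  rw [mul_div_assoc', mul_div_assoc', my_exp_aux1 x, my_exp_aux2 x]
  rw [e1, e2, show -(2*I*Complex.sin (x:ℂ)) = (2*I) * (-Complex.sin (x:ℂ)) by ring,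
    show (2*I*Complex.sin (x:ℂ)) = (2*I) * (Complex.sin (x:ℂ)) by ring,
    mul_div_mul_left _ _ h2I, mul_div_mul_left _ _ h2I]
  rw [← Complex.ofReal_sin]
  norm_num
  push_cast at hsub hadd
  have hneg : -(x:ℂ) - (π:ℂ)*(n:ℂ) ≠ 0 := by
    intro h
    apply hadd
    linear_combination -h
  have hdC : (x:ℂ)^2 - (π:ℂ)^2*(n:ℂ)^2 ≠ 0 := by
    have h : (x:ℂ)^2 - (π:ℂ)^2*(n:ℂ)^2 = ((x:ℂ) - π*n)*((x:ℂ) + π*n) := by ring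
    rw [h]
    exact mul_ne_zero hsub hadd
  rw [show (-((π:ℂ) * (n:ℂ)) + -(x:ℂ)) = -((x:ℂ) + (π:ℂ)*(n:ℂ)) from by ring, div_neg, neg_div,
    neg_neg]
  rw [div_add_div _ _ hsub hadd]
  rw [div_div, div_eq_div_iff (by exact mul_ne_zero (mul_ne_zero hsub hadd) two_ne_zero)
    (by rw [show ((x:ℂ)^2 - ((π:ℂ)*(n:ℂ))^2) = (x:ℂ)^2 - (π:ℂ)^2*(n:ℂ)^2 from by ring]; exact hdC)]
  ring

private lemma my_summable (x : ℝ) :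
    Summable (fun n : ℤ => x * Real.sin x / (x^2 - (π*n)^2)) := by
  have hπ := Real.pi_pos
  have hnat : Summable (fun n : ℕ => x * Real.sin x / (x^2 - (π*n)^2)) := by
    have hg : Summable (fun n : ℕ => (|x * Real.sin x| * 4 / (3*π^2)) * (1/(n:ℝ)^2)) :=
      (summable_one_div_nat_pow.mpr one_lt_two).mul_left _
    apply Summable.of_norm_bounded_eventually_nat hg
    filter_upwards [Filter.eventually_ge_atTop (⌈2*|x|/π⌉₊ + 1)] with n hn
    have hn1 : 1 ≤ n := le_trans (Nat.le_add_left 1 _) hn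
    have hn0 : (0:ℝ) < n := by exact_mod_cast hn1
    have hn' : 2*|x|/π ≤ n := by
      calc 2*|x|/π ≤ (⌈2*|x|/π⌉₊ : ℝ) := Nat.le_ceil _
        _ ≤ n := by exact_mod_cast Nat.le_of_succ_le hn
    have hx2 : x^2 ≤ (π*n)^2/4 := by
      have h1 : 2*|x| ≤ π*n := by
        rw [div_le_iff₀ hπ] at hn'
        linarith [hn']
      nlinarith [abs_nonneg x, _root_.sq_abs x]
    have hd : (3/4) * (π*n)^2 ≤ |x^2 - (π*(n:ℝ))^2| := by
      rw [abs_sub_comm, _root_.abs_of_nonneg (by nlinarith)]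
      nlinarith
    rw [Real.norm_eq_abs, abs_div]
    calc |x * Real.sin x| / |x^2 - (π*(n:ℝ))^2|
        ≤ |x * Real.sin x| / ((3/4) * (π*n)^2) := by
          apply div_le_div_of_nonneg_left (abs_nonneg _) (by positivity) hd
      _ = (|x * Real.sin x| * 4 / (3*π^2)) * (1/(n:ℝ)^2) := by
          field_simp
  apply Summable.of_nat_of_neg
  · exact hnat.congr fun n => by push_cast; ring
  · exact hnat.congr fun n => by push_cast; ring

theorem sum_inv_pi_sq_sub_sq (x : ℝ) (hx : ∀ n : ℤ, x ≠ π * n) :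
    HasSum (fun j : ℕ => 1 / ((π * (j + 1 : ℕ)) ^ 2 - x ^ 2))
      ((1 / 2) * (1 / x ^ 2 - Real.cos x / (x * Real.sin x))) := by
  have hx0 : x ≠ 0 := by simpa using hx 0
  have hs : Real.sin x ≠ 0 := Real.sin_ne_zero_iff.mpr fun n h => hx n (by rw [← h, mul_comm])
  have hsub : ∀ n : ℤ, x - π*n ≠ 0 := fun n => sub_ne_zero.mpr (hx n)
  have hadd : ∀ n : ℤ, x + π*n ≠ 0 := by
    intro n h
    exact hsub (-n) (by push_cast; linarith)
  have hden : ∀ n : ℤ, x^2 - (π*n)^2 ≠ 0 := by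
    intro n
    have h : x^2 - (π*n)^2 = (x - π*n)*(x + π*n) := by ring
    rw [h]
    exact mul_ne_zero (hsub n) (hadd n)
  set f : ℝ → ℂ := fun t : ℝ => Complex.cos (x * (2*t - 1)) with hf
  have hcont : Continuous f := Complex.continuous_cos.comp (by continuity)
  have hend : f 0 = f 1 := by
    simp only [hf]
    norm_num [Complex.cos_neg]
  set F : C(𝕌, ℂ) := ⟨AddCircle.liftIco 1 0 f,
    AddCircle.liftIco_zero_continuous hend hcont.continuousOn⟩ with hF
  have hFcoeff : ∀ n : ℤ, fourierCoeff F n = ((x*Real.sin x/(x^2 - (π*n)^2) : ℝ) : ℂ) := by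
    intro n
    rw [hF, ContinuousMap.coe_mk, fourierCoeff_liftIco_eq]
    simpa only [zero_add] using my_coeff_eq x hx n
  have hsummable : Summable (fourierCoeff F) :=
    ((summable_ofReal).mpr (my_summable x)).congr fun n => (hFcoeff n).symm
  have hpt := has_pointwise_sum_fourier_series_of_summable hsummable ((0:ℝ) : 𝕌)
  have hF0 : F ((0:ℝ) : 𝕌) = Complex.cos x := by
    rw [hF, ContinuousMap.coe_mk,
      AddCircle.liftIco_coe_apply (by norm_num : (0:ℝ) ∈ Ico (0:ℝ) (0+1))]
    simp only [hf]
    norm_num [Complex.cos_neg]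
  rw [hF0] at hpt
  have h5 : HasSum (fun n : ℤ => x*Real.sin x/(x^2-(π*n)^2)) (Real.cos x) := by
    apply hasSum_ofReal.mp
    rw [Complex.ofReal_cos]
    rwa [show (fun n : ℤ => fourierCoeff F n • fourier n ((0:ℝ):𝕌))
        = fun n : ℤ => ((x*Real.sin x/(x^2-(π*n)^2) : ℝ) : ℂ) from funext fun n => by
      rw [hFcoeff n, QuotientAddGroup.mk_zero, fourier_eval_zero, smul_eq_mul, mul_one]] at hpt
  have h6 := h5.nat_add_neg
  have h7 := (hasSum_nat_add_iff' 1).mpr h6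
  have h8 := h7.mul_left (-1/(2*x*Real.sin x))
  convert h8 using 1
  · rfl
  · funext j
    have hd := hden ((j:ℤ)+1)
    have h1 := hsub ((j:ℤ)+1)
    have h2 := hadd ((j:ℤ)+1)
    push_cast
    push_cast at hd h1 h2
    have hd' : (π*((j:ℝ)+1))^2 - x^2 ≠ 0 := fun h => hd (by linarith)
    rw [show (π*(-((j:ℝ)+1)))^2 = (π*((j:ℝ)+1))^2 by ring]
    field_simp [hd, hd']
    ring_nf
    rw [show (-π ^ 2 - π ^ 2 * (j:ℝ) * 2 - π ^ 2 * (j:ℝ) ^ 2 + x ^ 2) = -(π ^ 2 + π ^ 2 * (j:ℝ) * 2 + π ^ 2 * (j:ℝ) ^ 2 - x ^ 2) by ring, inv_neg]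
    ring
  · simp only [Finset.range_one, Finset.sum_singleton]
    push_cast
    norm_num
    field_simp
    ring

end
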